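/- Fix s ∈ {1,…,n} and suppose (i*, α*) ∈ argmin_{i∈{0,…,s−1}, α∈ℝ} P_s(i,α). Define y* ∈ ℝˢ by y*_j := α* for j ∈ {i*+1,…,s}, and, if i* ≥ 1, let y*_{1:i*} ∈ ℝ^{i*} be any global minimizer of h_{i*} over ℝ^{i*}. Then y* is a global minimizer of h_s over ℝˢ, i.e., h_s(y*) = H(s). -/

import Mathlib

open scoped Classical

/-- `h_s(y; z_{1:s})` (0-indexed: coordinates `0,…,s−1` of `y`,`z`,`l`,`u` play the role of
the paper's coordinates `1,…,s`): the objective of the fused ℓ₀ proximal subproblem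
`(1/2)Σ_{j<s}(y_j−z_j)² + λ₁ Σ_{j<s−1}|y_j−y_{j+1}|₀ + Σ_{j<s} ω_j(y_j)`,
with value `⊤` outside the box constraints. -/
noncomputable def hfun (lam1 lam2 : ℝ) (l u z : ℕ → ℝ) (s : ℕ) (y : ℕ → ℝ) : EReal :=
  if ∀ j ∈ Finset.range s, l j ≤ y j ∧ y j ≤ u j then
    ((((1 : ℝ) / 2) * ∑ j ∈ Finset.range s, (y j - z j) ^ 2
      + lam1 * ∑ j ∈ Finset.range (s - 1), (if y j = y (j + 1) then (0 : ℝ) else 1)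
      + lam2 * ∑ j ∈ Finset.range s, (if y j = 0 then (0 : ℝ) else 1) : ℝ) : EReal)
  else ⊤

/-- `H(0) = −λ₁` and, for `s ≥ 1`, `H(s) = min_{y ∈ ℝˢ} h_s(y; z_{1:s})`
(the minimum is attained; it equals the infimum). -/
noncomputable def Hfun (lam1 lam2 : ℝ) (l u z : ℕ → ℝ) : ℕ → EReal
  | 0 => ((-lam1 : ℝ) : EReal)
  | s + 1 => ⨅ y : ℕ → ℝ, hfun lam1 lam2 l u z (s + 1) y

/-- `P_s(i,α) = H(i) + (1/2)Σ_{j=i+1}^{s}(α−z_j)² + Σ_{j=i+1}^{s} ω_j(α) + λ₁`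
(0-indexed: the sums run over `j ∈ [i, s)`). -/
noncomputable def Pfun (lam1 lam2 : ℝ) (l u z : ℕ → ℝ) (s i : ℕ) (α : ℝ) : EReal :=
  Hfun lam1 lam2 l u z i +
    (if ∀ j ∈ Finset.Ico i s, l j ≤ α ∧ α ≤ u j then
      ((((1 : ℝ) / 2) * ∑ j ∈ Finset.Ico i s, (α - z j) ^ 2
        + lam2 * ((s - i : ℕ) : ℝ) * (if α = 0 then (0 : ℝ) else 1) + lam1 : ℝ) : EReal)
    else ⊤)

/-- `P_s^*(α) = min_{i ∈ {0,…,s−1}} P_s(i,α)`. -/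
noncomputable def Pstar (lam1 lam2 : ℝ) (l u z : ℕ → ℝ) (s : ℕ) (α : ℝ) : EReal :=
  ⨅ i ∈ Finset.range s, Pfun lam1 lam2 l u z s i α


noncomputable def hreal (lam1 lam2 : ℝ) (z : ℕ → ℝ) (s : ℕ) (y : ℕ → ℝ) : ℝ :=
  ((1 : ℝ) / 2) * ∑ j ∈ Finset.range s, (y j - z j) ^ 2
    + lam1 * ∑ j ∈ Finset.range (s - 1), (if y j = y (j + 1) then (0 : ℝ) else 1)
    + lam2 * ∑ j ∈ Finset.range s, (if y j = 0 then (0 : ℝ) else 1)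

noncomputable def tailreal (lam2 : ℝ) (z : ℕ → ℝ) (s i : ℕ) (α : ℝ) : ℝ :=
  ((1 : ℝ) / 2) * ∑ j ∈ Finset.Ico i s, (α - z j) ^ 2
    + lam2 * ((s - i : ℕ) : ℝ) * (if α = 0 then (0 : ℝ) else 1)

lemma hfun_eq (lam1 lam2 : ℝ) (l u z : ℕ → ℝ) (s : ℕ) (y : ℕ → ℝ) :
    hfun lam1 lam2 l u z s y =
      if ∀ j ∈ Finset.range s, l j ≤ y j ∧ y j ≤ u j then
        ((hreal lam1 lam2 z s y : ℝ) : EReal)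
      else ⊤ := rfl

lemma Pfun_eq (lam1 lam2 : ℝ) (l u z : ℕ → ℝ) (s i : ℕ) (α : ℝ) :
    Pfun lam1 lam2 l u z s i α = Hfun lam1 lam2 l u z i +
      (if ∀ j ∈ Finset.Ico i s, l j ≤ α ∧ α ≤ u j then
        ((tailreal lam2 z s i α + lam1 : ℝ) : EReal)
      else ⊤) := rfl

lemma Hfun_zero (lam1 lam2 : ℝ) (l u z : ℕ → ℝ) :
    Hfun lam1 lam2 l u z 0 = ((-lam1 : ℝ) : EReal) := rfl

lemma Hfun_succ (lam1 lam2 : ℝ) (l u z : ℕ → ℝ) (k : ℕ) :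
    Hfun lam1 lam2 l u z (k + 1) = ⨅ y : ℕ → ℝ, hfun lam1 lam2 l u z (k + 1) y := rfl

lemma hreal_nonneg (lam1 lam2 : ℝ) (h1 : 0 ≤ lam1) (h2 : 0 ≤ lam2) (z : ℕ → ℝ) (s : ℕ)
    (y : ℕ → ℝ) : 0 ≤ hreal lam1 lam2 z s y := by
  unfold hreal
  have A : (0:ℝ) ≤ ∑ j ∈ Finset.range s, (y j - z j) ^ 2 :=
    Finset.sum_nonneg fun j _ => sq_nonneg _
  have B : (0:ℝ) ≤ ∑ j ∈ Finset.range (s - 1), (if y j = y (j + 1) then (0:ℝ) else 1) :=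
    Finset.sum_nonneg fun j _ => by split <;> norm_num
  have C : (0:ℝ) ≤ ∑ j ∈ Finset.range s, (if y j = 0 then (0:ℝ) else 1) :=
    Finset.sum_nonneg fun j _ => by split <;> norm_num
  have hB := mul_nonneg h1 B
  have hC := mul_nonneg h2 C
  linarith

lemma hfun_nonneg (lam1 lam2 : ℝ) (h1 : 0 ≤ lam1) (h2 : 0 ≤ lam2) (l u z : ℕ → ℝ) (s : ℕ)
    (y : ℕ → ℝ) : (0 : EReal) ≤ hfun lam1 lam2 l u z s y := by
  rw [hfun_eq]
  split
  · exact_mod_cast hreal_nonneg lam1 lam2 h1 h2 z s y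
  · exact le_top

lemma Hfun_ne_bot (lam1 lam2 : ℝ) (h1 : 0 ≤ lam1) (h2 : 0 ≤ lam2) (l u z : ℕ → ℝ) (i : ℕ) :
    Hfun lam1 lam2 l u z i ≠ ⊥ := by
  cases i with
  | zero => rw [Hfun_zero]; exact EReal.coe_ne_bot _
  | succ k =>
    have h0 : (0 : EReal) ≤ Hfun lam1 lam2 l u z (k + 1) := by
      rw [Hfun_succ]
      exact le_iInf fun y => hfun_nonneg lam1 lam2 h1 h2 l u z (k+1) y
    intro hb
    rw [hb] at h0
    exact absurd h0 (by simp)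

lemma hreal_const (lam1 lam2 : ℝ) (z : ℕ → ℝ) (s : ℕ) (w : ℕ → ℝ) (α : ℝ)
    (hw : ∀ j, j < s → w j = α) :
    hreal lam1 lam2 z s w = tailreal lam2 z s 0 α := by
  unfold hreal tailreal
  have h1 : ∑ j ∈ Finset.range s, (w j - z j) ^ 2 = ∑ j ∈ Finset.Ico 0 s, (α - z j) ^ 2 := by
    rw [← Finset.range_eq_Ico]
    exact Finset.sum_congr rfl fun j hj => by rw [hw j (Finset.mem_range.1 hj)]
  have h2 : ∑ j ∈ Finset.range (s - 1), (if w j = w (j + 1) then (0:ℝ) else 1) = 0 :=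
    Finset.sum_eq_zero fun j hj => by
      rw [Finset.mem_range] at hj
      rw [hw j (by omega), hw (j+1) (by omega)]
      simp
  have h3 : ∑ j ∈ Finset.range s, (if w j = 0 then (0:ℝ) else 1)
      = ((s - 0 : ℕ) : ℝ) * (if α = 0 then (0:ℝ) else 1) := by
    have hc : ∀ j ∈ Finset.range s, (if w j = 0 then (0:ℝ) else 1)
        = (if α = 0 then (0:ℝ) else 1) :=
      fun j hj => by rw [hw j (Finset.mem_range.1 hj)]
    rw [Finset.sum_congr rfl hc, Finset.sum_const, Finset.card_range, nsmul_eq_mul]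
    norm_num
  rw [h1, h2, h3]
  ring

lemma hreal_split (lam1 lam2 : ℝ) (z : ℕ → ℝ) (s k : ℕ) (hk : k + 1 < s)
    (w : ℕ → ℝ) (α : ℝ) (hw : ∀ j, k + 1 ≤ j → j < s → w j = α) :
    hreal lam1 lam2 z s w = hreal lam1 lam2 z (k + 1) w
      + lam1 * (if w k = α then (0:ℝ) else 1) + tailreal lam2 z s (k + 1) α := by
  have hks : k + 1 ≤ s := hk.le
  have hsq : ∑ j ∈ Finset.range s, (w j - z j) ^ 2
      = ∑ j ∈ Finset.range (k+1), (w j - z j) ^ 2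
        + ∑ j ∈ Finset.Ico (k+1) s, (α - z j) ^ 2 := by
    rw [← Finset.sum_range_add_sum_Ico _ hks]
    congr 1
    refine Finset.sum_congr rfl fun j hj => ?_
    rw [Finset.mem_Ico] at hj
    rw [hw j hj.1 hj.2]
  have hcpl : ∑ j ∈ Finset.range (s - 1), (if w j = w (j + 1) then (0:ℝ) else 1)
      = ∑ j ∈ Finset.range k, (if w j = w (j + 1) then (0:ℝ) else 1)
        + (if w k = α then (0:ℝ) else 1) := by
    have hks' : k ≤ s - 1 := by omega
    have hk' : k < s - 1 := by omega
    have hzero : ∑ j ∈ Finset.Ico (k+1) (s-1), (if w j = w (j + 1) then (0:ℝ) else 1) = 0 :=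
      Finset.sum_eq_zero fun j hj => by
        rw [Finset.mem_Ico] at hj
        rw [hw j hj.1 (by omega), hw (j+1) (by omega) (by omega)]
        simp
    rw [← Finset.sum_range_add_sum_Ico _ hks', Finset.sum_eq_sum_Ico_succ_bot hk', hzero,
      hw (k+1) le_rfl hk]
    ring
  have hl0 : ∑ j ∈ Finset.range s, (if w j = 0 then (0:ℝ) else 1)
      = ∑ j ∈ Finset.range (k+1), (if w j = 0 then (0:ℝ) else 1)
        + ((s - (k+1) : ℕ) : ℝ) * (if α = 0 then (0:ℝ) else 1) := by
    rw [← Finset.sum_range_add_sum_Ico _ hks]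
    congr 1
    have hc : ∀ j ∈ Finset.Ico (k+1) s, (if w j = 0 then (0:ℝ) else 1)
        = (if α = 0 then (0:ℝ) else 1) := by
      intro j hj
      rw [Finset.mem_Ico] at hj
      rw [hw j hj.1 hj.2]
    rw [Finset.sum_congr rfl hc, Finset.sum_const, Nat.card_Ico, nsmul_eq_mul]
  unfold hreal tailreal
  simp only [Nat.add_sub_cancel]
  rw [hsq, hcpl, hl0]
  ring


/-- if `(i*, α*)` is a global minimizer of `P_s` over `{0,…,s−1} × ℝ`,
`y*` has `y*_j = α*` for the (0-indexed) coordinates `j ∈ {i*,…,s−1}` (paper: `{i*+1,…,s}`),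
and (when `i* ≥ 1`) the first `i*` coordinates of `y*` form a global minimizer of `h_{i*}`,
then `y*` is a global minimizer of `h_s`, i.e. `h_s(y*) = H(s)`. -/
theorem stmt4 (n : ℕ) (hn : 1 ≤ n) (lam1 lam2 : ℝ) (hlam1 : 0 < lam1) (hlam2 : 0 < lam2)
    (l u z : ℕ → ℝ) (hlu : ∀ i < n, l i ≤ 0 ∧ 0 ≤ u i)
    (s : ℕ) (hs1 : 1 ≤ s) (hsn : s ≤ n)
    (istar : ℕ) (histar : istar < s) (αstar : ℝ)
    (hargmin : ∀ i < s, ∀ α : ℝ,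
      Pfun lam1 lam2 l u z s istar αstar ≤ Pfun lam1 lam2 l u z s i α)
    (ystar : ℕ → ℝ)
    (htail : ∀ j, istar ≤ j → j < s → ystar j = αstar)
    (hhead : istar ≠ 0 → ∀ w : ℕ → ℝ,
      hfun lam1 lam2 l u z istar ystar ≤ hfun lam1 lam2 l u z istar w) :
    hfun lam1 lam2 l u z s ystar = Hfun lam1 lam2 l u z s := by
  have h1' : (0:ℝ) ≤ lam1 := hlam1.le
  have h2' : (0:ℝ) ≤ lam2 := hlam2.le
  -- Part A : P_s(i*,α*) ≤ h_s(w) for every w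
  have keyA : ∀ w : ℕ → ℝ, Pfun lam1 lam2 l u z s istar αstar ≤ hfun lam1 lam2 l u z s w := by
    intro w
    by_cases hbox : ∀ j ∈ Finset.range s, l j ≤ w j ∧ w j ≤ u j
    · set α := w (s - 1) with hα
      have hex : ∃ i, ∀ j, i ≤ j → j < s → w j = α := by
        refine ⟨s - 1, fun j hj1 hj2 => ?_⟩
        have hj : j = s - 1 := by omega
        rw [hj]
      have hPi : ∀ j, Nat.find hex ≤ j → j < s → w j = α := Nat.find_spec hex
      have hi_le : Nat.find hex ≤ s - 1 :=
        Nat.find_min' hex (fun j hj1 hj2 => by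
          have hj : j = s - 1 := by omega
          rw [hj])
      have his : Nat.find hex < s := by omega
      have hboxα : ∀ j ∈ Finset.Ico (Nat.find hex) s, l j ≤ α ∧ α ≤ u j := by
        intro j hj
        rw [Finset.mem_Ico] at hj
        rw [← hPi j hj.1 hj.2]
        exact hbox j (Finset.mem_range.2 hj.2)
      rcases Nat.eq_zero_or_pos (Nat.find hex) with hi0 | hipos
      · rw [hi0] at hPi hboxα
        have hcw : hfun lam1 lam2 l u z s w = ((tailreal lam2 z s 0 α : ℝ) : EReal) := by
          rw [hfun_eq, if_pos hbox,
            hreal_const lam1 lam2 z s w α (fun j hj => hPi j (Nat.zero_le _) hj)]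
        have hP0 : Pfun lam1 lam2 l u z s 0 α = ((tailreal lam2 z s 0 α : ℝ) : EReal) := by
          rw [Pfun_eq, if_pos hboxα, Hfun_zero, ← EReal.coe_add]
          congr 1
          ring
        rw [hcw, ← hP0]
        exact hargmin 0 hs1 α
      · obtain ⟨k, hik⟩ : ∃ k, Nat.find hex = k + 1 := ⟨Nat.find hex - 1, by omega⟩
        rw [hik] at hPi hboxα his
        have hwk : w k ≠ α := by
          have hmin := Nat.find_min hex (by omega : k < Nat.find hex)
          intro hc
          apply hmin
          intro j hj1 hj2
          rcases eq_or_lt_of_le hj1 with he | hlt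
          · rw [← he]; exact hc
          · exact hPi j hlt hj2
        have hsplit := hreal_split lam1 lam2 z s k his w α (fun j h1 h2 => hPi j h1 h2)
        rw [if_neg hwk] at hsplit
        have hbox' : ∀ j ∈ Finset.range (k + 1), l j ≤ w j ∧ w j ≤ u j := by
          intro j hj
          rw [Finset.mem_range] at hj
          exact hbox j (Finset.mem_range.2 (by omega))
        have hHle : Hfun lam1 lam2 l u z (k + 1)
            ≤ ((hreal lam1 lam2 z (k + 1) w : ℝ) : EReal) := by
          rw [Hfun_succ]
          have hle := iInf_le (fun y => hfun lam1 lam2 l u z (k + 1) y) w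
          rwa [hfun_eq, if_pos hbox'] at hle
        calc Pfun lam1 lam2 l u z s istar αstar ≤ Pfun lam1 lam2 l u z s (k + 1) α :=
              hargmin (k + 1) his α
          _ = Hfun lam1 lam2 l u z (k + 1)
              + ((tailreal lam2 z s (k + 1) α + lam1 : ℝ) : EReal) := by
              rw [Pfun_eq, if_pos hboxα]
          _ ≤ ((hreal lam1 lam2 z (k + 1) w : ℝ) : EReal)
              + ((tailreal lam2 z s (k + 1) α + lam1 : ℝ) : EReal) :=
              add_le_add_left hHle _
          _ = ((hreal lam1 lam2 z s w : ℝ) : EReal) := by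
              rw [← EReal.coe_add]
              exact EReal.coe_eq_coe_iff.2 (by rw [hsplit]; ring)
          _ = hfun lam1 lam2 l u z s w := by rw [hfun_eq, if_pos hbox]
    · rw [hfun_eq, if_neg hbox]
      exact le_top
  -- Part B : h_s(y*) ≤ P_s(i*,α*)
  have keyB : hfun lam1 lam2 l u z s ystar ≤ Pfun lam1 lam2 l u z s istar αstar := by
    by_cases hboxα : ∀ j ∈ Finset.Ico istar s, l j ≤ αstar ∧ αstar ≤ u j
    · rcases Nat.eq_zero_or_pos istar with h0 | hpos
      · subst h0
        have hw : ∀ j, j < s → ystar j = αstar := fun j hj => htail j (Nat.zero_le _) hj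
        have hboxy : ∀ j ∈ Finset.range s, l j ≤ ystar j ∧ ystar j ≤ u j := by
          intro j hj
          rw [Finset.mem_range] at hj
          rw [hw j hj]
          exact hboxα j (Finset.mem_Ico.2 ⟨Nat.zero_le _, hj⟩)
        rw [hfun_eq, if_pos hboxy, hreal_const lam1 lam2 z s ystar αstar hw,
          Pfun_eq, if_pos hboxα, Hfun_zero, ← EReal.coe_add]
        exact EReal.coe_le_coe_iff.2 (by linarith)
      · obtain ⟨k, hik⟩ : ∃ k, istar = k + 1 := ⟨istar - 1, by omega⟩
        subst hik
        have hmin := hhead (Nat.succ_ne_zero k)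
        have hbox0 : ∀ j ∈ Finset.range (k + 1), l j ≤ (fun _ : ℕ => (0:ℝ)) j
            ∧ (fun _ : ℕ => (0:ℝ)) j ≤ u j := by
          intro j hj
          rw [Finset.mem_range] at hj
          exact hlu j (by omega)
        have hfin : hfun lam1 lam2 l u z (k + 1) ystar ≠ ⊤ := by
          have h0 := hmin (fun _ => (0:ℝ))
          rw [hfun_eq lam1 lam2 l u z (k+1) (fun _ => (0:ℝ)), if_pos hbox0] at h0
          intro hT
          rw [hT] at h0
          exact absurd (top_le_iff.1 h0) (EReal.coe_ne_top _)
        have hboxy1 : ∀ j ∈ Finset.range (k + 1), l j ≤ ystar j ∧ ystar j ≤ u j := by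
          by_contra hc
          rw [hfun_eq, if_neg hc] at hfin
          exact hfin rfl
        have hHeq : Hfun lam1 lam2 l u z (k + 1)
            = ((hreal lam1 lam2 z (k + 1) ystar : ℝ) : EReal) := by
          rw [Hfun_succ]
          apply le_antisymm
          · have hle := iInf_le (fun y => hfun lam1 lam2 l u z (k + 1) y) ystar
            rwa [hfun_eq, if_pos hboxy1] at hle
          · refine le_iInf fun y => ?_
            have hle := hmin y
            rwa [hfun_eq lam1 lam2 l u z (k+1) ystar, if_pos hboxy1] at hle
        have hboxy : ∀ j ∈ Finset.range s, l j ≤ ystar j ∧ ystar j ≤ u j := by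
          intro j hj
          rw [Finset.mem_range] at hj
          rcases lt_or_ge j (k + 1) with h | h
          · exact hboxy1 j (Finset.mem_range.2 h)
          · rw [htail j h hj]
            exact hboxα j (Finset.mem_Ico.2 ⟨h, hj⟩)
        have hsplit := hreal_split lam1 lam2 z s k histar ystar αstar
          (fun j hj1 hj2 => htail j hj1 hj2)
        rw [hfun_eq, if_pos hboxy, Pfun_eq, if_pos hboxα, hHeq, ← EReal.coe_add]
        apply EReal.coe_le_coe_iff.2
        rw [hsplit]
        have hc : lam1 * (if ystar k = αstar then (0:ℝ) else 1) ≤ lam1 := by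
          split <;> nlinarith
        linarith
    · rw [Pfun_eq, if_neg hboxα,
        EReal.add_top_of_ne_bot (Hfun_ne_bot lam1 lam2 h1' h2' l u z istar)]
      exact le_top
  obtain ⟨t, hst⟩ : ∃ t, s = t + 1 := ⟨s - 1, by omega⟩
  subst hst
  rw [Hfun_succ]
  exact le_antisymm (keyB.trans (le_iInf keyA)) (iInf_le _ ystar)
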